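/- Let S be a commutative semiring that is not entire, i.e., there exist nonzero x, y ∈ S with xy = 0. Then for every n ≥ 2, the diameter of the commuting graph Γ(M_n(S)) equals 3. -/

import Mathlib

/-- The commuting graph of the semiring of `n × n` matrices over `R`: vertices are the
noncentral matrices, and two distinct vertices are adjacent iff they commute. -/
def commGraph (R : Type*) [Semiring R] (n : ℕ) :
    SimpleGraph {X : Matrix (Fin n) (Fin n) R // ¬ ∀ Y, X * Y = Y * X} where
  Adj X Y := X ≠ Y ∧ X.1 * Y.1 = Y.1 * X.1
  symm := ⟨fun _ _ h => ⟨fun e => h.1 e.symm, h.2.symm⟩⟩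
  loopless := ⟨fun _ h => h.1 rfl⟩

namespace CommGraphNonentireAux

open Matrix Finset

variable {S : Type*} [CommSemiring S] {n : ℕ}

/-- single-entry matrix with a 1 at position (k,l). -/
def EE (n : ℕ) (S : Type*) [CommSemiring S] (k l : Fin n) : Matrix (Fin n) (Fin n) S :=
  Matrix.of fun i j => if i = k ∧ j = l then 1 else 0

lemma mul_EE (Z : Matrix (Fin n) (Fin n) S) (k l i j : Fin n) :
    (Z * EE n S k l) i j = if j = l then Z i k else 0 := by
  rw [Matrix.mul_apply]
  simp only [EE, Matrix.of_apply, mul_ite, mul_one, mul_zero]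
  by_cases hj : j = l
  · simp only [hj, and_true]
    simpa using Finset.sum_ite_eq' Finset.univ k (fun t => Z i t)
  · simp [hj]

lemma EE_mul (Z : Matrix (Fin n) (Fin n) S) (k l i j : Fin n) :
    (EE n S k l * Z) i j = if i = k then Z l j else 0 := by
  rw [Matrix.mul_apply]
  simp only [EE, Matrix.of_apply, ite_mul, one_mul, zero_mul]
  by_cases hi : i = k
  · simp only [hi, true_and]
    simpa using Finset.sum_ite_eq' Finset.univ l (fun t => Z t j)
  · simp [hi]

lemma offdiag_of_central {Z : Matrix (Fin n) (Fin n) S} (h : ∀ Y, Z * Y = Y * Z)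
    (i k : Fin n) (hik : i ≠ k) : Z i k = 0 := by
  have H := congrFun (congrFun (h (EE n S k i)) i) i
  rw [mul_EE, EE_mul, if_pos rfl, if_neg hik] at H
  exact H

lemma diag_of_central {Z : Matrix (Fin n) (Fin n) S} (h : ∀ Y, Z * Y = Y * Z)
    (k l : Fin n) : Z k k = Z l l := by
  have H := congrFun (congrFun (h (EE n S k l)) k) l
  rw [mul_EE, EE_mul, if_pos rfl, if_pos rfl] at H
  exact H

lemma central_of_scalar (c : S) (Z : Matrix (Fin n) (Fin n) S)
    (hZ : ∀ i j, Z i j = if i = j then c else 0) : ∀ Y, Z * Y = Y * Z := by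
  have hZ1 : Z = c • (1 : Matrix (Fin n) (Fin n) S) := by
    ext i j
    rw [hZ, Matrix.smul_apply, Matrix.one_apply]
    split <;> simp
  intro Y
  rw [hZ1, Matrix.smul_mul, Matrix.one_mul, Matrix.mul_smul, Matrix.mul_one]

def nilN (S : Type*) [CommSemiring S] (n : ℕ) : Matrix (Fin n) (Fin n) S :=
  Matrix.of fun i j => if (i : ℕ) + 1 = (j : ℕ) then 1 else 0

lemma sum_ite_val (m : ℕ) (f : Fin n → S) :
    ∑ k : Fin n, (if (k : ℕ) = m then f k else 0) = if h : m < n then f ⟨m, h⟩ else 0 := by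
  by_cases h : m < n
  · rw [dif_pos h]
    have e : (∑ k : Fin n, (if (k : ℕ) = m then f k else 0))
        = ∑ k : Fin n, (if k = (⟨m, h⟩ : Fin n) then f k else 0) :=
      Finset.sum_congr rfl fun k _ => if_congr (by simp [Fin.ext_iff]) rfl rfl
    rw [e]
    simpa using Finset.sum_ite_eq' Finset.univ (⟨m, h⟩ : Fin n) f
  · rw [dif_neg h]
    exact Finset.sum_eq_zero fun k _ => if_neg (by omega)

lemma mul_nilN (Z : Matrix (Fin n) (Fin n) S) (i j : Fin n) :
    (Z * nilN S n) i j = if h : 0 < (j : ℕ) then Z i ⟨(j : ℕ) - 1, by omega⟩ else 0 := by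
  rw [Matrix.mul_apply]
  simp only [nilN, Matrix.of_apply, mul_ite, mul_one, mul_zero]
  by_cases h : 0 < (j : ℕ)
  · rw [dif_pos h]
    have e : (∑ k : Fin n, (if (k : ℕ) + 1 = (j : ℕ) then Z i k else 0))
        = ∑ k : Fin n, (if (k : ℕ) = (j : ℕ) - 1 then Z i k else 0) :=
      Finset.sum_congr rfl fun k _ => if_congr (by omega) rfl rfl
    rw [e, sum_ite_val ((j : ℕ) - 1) (fun k => Z i k), dif_pos (by omega : (j : ℕ) - 1 < n)]
  · rw [dif_neg h]
    exact Finset.sum_eq_zero fun k _ => if_neg (by omega)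

lemma nilN_mul (Z : Matrix (Fin n) (Fin n) S) (i j : Fin n) :
    (nilN S n * Z) i j = if h : (i : ℕ) + 1 < n then Z ⟨(i : ℕ) + 1, h⟩ j else 0 := by
  rw [Matrix.mul_apply]
  simp only [nilN, Matrix.of_apply, ite_mul, one_mul, zero_mul]
  have e : (∑ k : Fin n, (if (i : ℕ) + 1 = (k : ℕ) then Z k j else 0))
      = ∑ k : Fin n, (if (k : ℕ) = (i : ℕ) + 1 then Z k j else 0) :=
    Finset.sum_congr rfl fun k _ => if_congr (by omega) rfl rfl
  rw [e, sum_ite_val ((i : ℕ) + 1) (fun k => Z k j)]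

lemma mul_nilNT (Z : Matrix (Fin n) (Fin n) S) (i j : Fin n) :
    (Z * (nilN S n)ᵀ) i j = if h : (j : ℕ) + 1 < n then Z i ⟨(j : ℕ) + 1, h⟩ else 0 := by
  rw [Matrix.mul_apply]
  simp only [nilN, Matrix.transpose_apply, Matrix.of_apply, mul_ite, mul_one, mul_zero]
  have e : (∑ k : Fin n, (if (j : ℕ) + 1 = (k : ℕ) then Z i k else 0))
      = ∑ k : Fin n, (if (k : ℕ) = (j : ℕ) + 1 then Z i k else 0) :=
    Finset.sum_congr rfl fun k _ => if_congr (by omega) rfl rfl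
  rw [e, sum_ite_val ((j : ℕ) + 1) (fun k => Z i k)]

lemma nilNT_mul (Z : Matrix (Fin n) (Fin n) S) (i j : Fin n) :
    ((nilN S n)ᵀ * Z) i j = if h : 0 < (i : ℕ) then Z ⟨(i : ℕ) - 1, by omega⟩ j else 0 := by
  rw [Matrix.mul_apply]
  simp only [nilN, Matrix.transpose_apply, Matrix.of_apply, ite_mul, one_mul, zero_mul]
  by_cases h : 0 < (i : ℕ)
  · rw [dif_pos h]
    have e : (∑ k : Fin n, (if (k : ℕ) + 1 = (i : ℕ) then Z k j else 0))
        = ∑ k : Fin n, (if (k : ℕ) = (i : ℕ) - 1 then Z k j else 0) :=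
      Finset.sum_congr rfl fun k _ => if_congr (by omega) rfl rfl
    rw [e, sum_ite_val ((i : ℕ) - 1) (fun k => Z k j), dif_pos (by omega : (i : ℕ) - 1 < n)]
  · rw [dif_neg h]
    exact Finset.sum_eq_zero fun k _ => if_neg (by omega)

lemma scalar_of_comm_nilN (hn : 2 ≤ n) (Z : Matrix (Fin n) (Fin n) S)
    (hN : Z * nilN S n = nilN S n * Z) (hNT : Z * (nilN S n)ᵀ = (nilN S n)ᵀ * Z) :
    ∀ i j : Fin n, Z i j = if i = j then Z ⟨0, by omega⟩ ⟨0, by omega⟩ else 0 := by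
  have rowfact : ∀ j : Fin n, 0 < (j : ℕ) → Z ⟨0, by omega⟩ j = 0 := by
    intro j hj
    have H := congrFun (congrFun hNT (⟨0, by omega⟩ : Fin n)) ⟨(j : ℕ) - 1, by omega⟩
    rw [mul_nilNT, nilNT_mul] at H
    rw [dif_pos (by simp; omega : ((⟨(j : ℕ) - 1, by omega⟩ : Fin n) : ℕ) + 1 < n)] at H
    rw [dif_neg (by simp)] at H
    have : (⟨((⟨(j : ℕ) - 1, by omega⟩ : Fin n) : ℕ) + 1, by simp; omega⟩ : Fin n) = j := by
      simp [Fin.ext_iff]; omega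
    rwa [this] at H
  have colfact : ∀ i : Fin n, 0 < (i : ℕ) → Z i ⟨0, by omega⟩ = 0 := by
    intro i hi
    have H := congrFun (congrFun hN (⟨(i : ℕ) - 1, by omega⟩ : Fin n)) ⟨0, by omega⟩
    rw [mul_nilN, nilN_mul] at H
    rw [dif_neg (by simp)] at H
    rw [dif_pos (by simp; omega : ((⟨(i : ℕ) - 1, by omega⟩ : Fin n) : ℕ) + 1 < n)] at H
    have : (⟨((⟨(i : ℕ) - 1, by omega⟩ : Fin n) : ℕ) + 1, by simp; omega⟩ : Fin n) = i := by
      simp [Fin.ext_iff]; omega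
    rw [this] at H
    exact H.symm
  have shift : ∀ (i j : Fin n), 0 < (i : ℕ) → 0 < (j : ℕ) →
      Z i j = Z ⟨(i : ℕ) - 1, by omega⟩ ⟨(j : ℕ) - 1, by omega⟩ := by
    intro i j hi hj
    have H := congrFun (congrFun hN (⟨(i : ℕ) - 1, by omega⟩ : Fin n)) j
    rw [mul_nilN, nilN_mul] at H
    rw [dif_pos hj] at H
    rw [dif_pos (by simp; omega : ((⟨(i : ℕ) - 1, by omega⟩ : Fin n) : ℕ) + 1 < n)] at H
    have : (⟨((⟨(i : ℕ) - 1, by omega⟩ : Fin n) : ℕ) + 1, by simp; omega⟩ : Fin n) = i := by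
      simp [Fin.ext_iff]; omega
    rw [this] at H
    exact H.symm
  have main : ∀ m : ℕ, ∀ i j : Fin n, (i : ℕ) = m →
      Z i j = if i = j then Z ⟨0, by omega⟩ ⟨0, by omega⟩ else 0 := by
    intro m
    induction m using Nat.strong_induction_on with
    | _ m ih =>
      intro i j him
      by_cases hi : 0 < (i : ℕ)
      · by_cases hj : 0 < (j : ℕ)
        · rw [shift i j hi hj, ih ((i : ℕ) - 1) (by omega) _ _ (by simp)]
          by_cases hij : i = j
          · rw [if_pos (by simp [Fin.ext_iff]; omega), if_pos hij]
          · rw [if_neg (by simp [Fin.ext_iff] at hij ⊢; omega), if_neg hij]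
        · have hj0 : j = ⟨0, by omega⟩ := by simp [Fin.ext_iff]; omega
          rw [if_neg (by simp [Fin.ext_iff]; omega), hj0]
          exact colfact i hi
      · have hi0 : i = ⟨0, by omega⟩ := by simp [Fin.ext_iff]; omega
        by_cases hj : 0 < (j : ℕ)
        · rw [if_neg (by simp [Fin.ext_iff]; omega), hi0]
          exact rowfact j hj
        · have hj0 : j = ⟨0, by omega⟩ := by simp [Fin.ext_iff]; omega
          rw [hi0, hj0, if_pos rfl]
  intro i j
  exact main (i : ℕ) i j rfl

/-- key upper-bound construction: every noncentral `X` commutes with a noncentral matrix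
all of whose entries are multiples of `a`. -/
lemma exists_annihilating_neighbor (hn : 2 ≤ n) (a : S) (ha : a ≠ 0)
    (X : Matrix (Fin n) (Fin n) S) (_hX : ¬ ∀ Y, X * Y = Y * X) :
    ∃ A : Matrix (Fin n) (Fin n) S, (¬ ∀ Y, A * Y = Y * A) ∧ X * A = A * X ∧
      ∃ U, A = a • U := by
  by_cases hc : ∀ Y, (a • X) * Y = Y * (a • X)
  · set i0 : Fin n := ⟨0, by omega⟩ with hi0
    set i1 : Fin n := ⟨1, by omega⟩ with hi1
    have hne10 : i1 ≠ i0 := by simp [hi0, hi1, Fin.ext_iff]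
    refine ⟨a • EE n S i0 i0, ?_, ?_, EE n S i0 i0, rfl⟩
    · intro hcen
      have H := congrFun (congrFun (hcen (EE n S i0 i1)) i0) i1
      rw [Matrix.smul_mul, Matrix.mul_smul, Matrix.smul_apply, Matrix.smul_apply] at H
      rw [EE_mul (EE n S i0 i1) i0 i0 i0 i1, mul_EE (EE n S i0 i1) i0 i0 i0 i1] at H
      rw [if_pos rfl, if_neg hne10] at H
      simp only [EE, Matrix.of_apply, smul_eq_mul, smul_zero] at H
      simp at H
      exact ha H
    · have offdiag : ∀ p q : Fin n, p ≠ q → a * X p q = 0 := by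
        intro p q hpq
        have := offdiag_of_central hc p q hpq
        rwa [Matrix.smul_apply, smul_eq_mul] at this
      ext p q
      rw [Matrix.mul_smul, Matrix.smul_mul, Matrix.smul_apply, Matrix.smul_apply,
        mul_EE, EE_mul]
      simp only [smul_eq_mul, mul_ite, mul_zero]
      by_cases hq : q = i0
      · by_cases hp : p = i0
        · rw [if_pos hq, if_pos hp, hp, hq]
        · rw [if_pos hq, if_neg hp]
          exact offdiag p i0 hp
      · by_cases hp : p = i0
        · rw [if_neg hq, if_pos hp]
          exact (offdiag i0 q (fun h => hq h.symm)).symm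
        · rw [if_neg hq, if_neg hp]
  · refine ⟨a • X, hc, ?_, X, rfl⟩
    rw [Matrix.mul_smul, Matrix.smul_mul]

lemma edist_le_one_of_comm {u v : {X : Matrix (Fin n) (Fin n) S // ¬ ∀ Y, X * Y = Y * X}}
    (h : u.1 * v.1 = v.1 * u.1) : (commGraph S n).edist u v ≤ 1 := by
  by_cases huv : u = v
  · rw [huv, SimpleGraph.edist_self]
    exact zero_le_one
  · exact le_of_eq (SimpleGraph.edist_eq_one_iff_adj.mpr ⟨huv, h⟩)

lemma edist_le_three (hn : 2 ≤ n) (x y : S) (hx : x ≠ 0) (hy : y ≠ 0) (hxy : x * y = 0)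
    (u v : {X : Matrix (Fin n) (Fin n) S // ¬ ∀ Y, X * Y = Y * X}) :
    (commGraph S n).edist u v ≤ 3 := by
  obtain ⟨A, hA, hXA, U, hU⟩ := exists_annihilating_neighbor hn x hx u.1 u.2
  obtain ⟨B, hB, hYB, V, hV⟩ := exists_annihilating_neighbor hn y hy v.1 v.2
  set a : {X : Matrix (Fin n) (Fin n) S // ¬ ∀ Y, X * Y = Y * X} := ⟨A, hA⟩
  set b : {X : Matrix (Fin n) (Fin n) S // ¬ ∀ Y, X * Y = Y * X} := ⟨B, hB⟩
  have h1 : (commGraph S n).edist u a ≤ 1 := edist_le_one_of_comm hXA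
  have h2 : (commGraph S n).edist a b ≤ 1 := by
    apply edist_le_one_of_comm
    show A * B = B * A
    rw [hU, hV, Matrix.smul_mul, Matrix.mul_smul, smul_smul, hxy, zero_smul,
      Matrix.smul_mul, Matrix.mul_smul, smul_smul, mul_comm y x, hxy, zero_smul]
  have h3 : (commGraph S n).edist b v ≤ 1 := edist_le_one_of_comm hYB.symm
  have t1 : (commGraph S n).edist u v ≤ (commGraph S n).edist u a + (commGraph S n).edist a v :=
    SimpleGraph.edist_triangle
  have t2 : (commGraph S n).edist a v ≤ (commGraph S n).edist a b + (commGraph S n).edist b v :=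
    SimpleGraph.edist_triangle
  calc (commGraph S n).edist u v
      ≤ (commGraph S n).edist u a + ((commGraph S n).edist a b + (commGraph S n).edist b v) :=
        le_trans t1 (add_le_add le_rfl t2)
    _ ≤ 1 + (1 + 1) := add_le_add h1 (add_le_add h2 h3)
    _ = 3 := by norm_num

lemma no_short_walk {u v : {X : Matrix (Fin n) (Fin n) S // ¬ ∀ Y, X * Y = Y * X}}
    (hne : u ≠ v) (hadj : ¬ (commGraph S n).Adj u v)
    (hmid : ∀ z, ¬ ((commGraph S n).Adj u z ∧ (commGraph S n).Adj z v))
    (w : (commGraph S n).Walk u v) : 3 ≤ w.length := by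
  match w with
  | SimpleGraph.Walk.nil => exact absurd rfl hne
  | SimpleGraph.Walk.cons h SimpleGraph.Walk.nil => exact absurd h hadj
  | SimpleGraph.Walk.cons h (SimpleGraph.Walk.cons h' SimpleGraph.Walk.nil) =>
      exact absurd ⟨h, h'⟩ (hmid _)
  | SimpleGraph.Walk.cons _ (SimpleGraph.Walk.cons _ (SimpleGraph.Walk.cons _ p)) =>
      simp only [SimpleGraph.Walk.length_cons]
      omega

end CommGraphNonentireAux

open Matrix CommGraphNonentireAux in
/-- If `S` is a nonentire commutative semiring (there are nonzero `x, y` with `x * y = 0`),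
then for every `n ≥ 2` the diameter of the commuting graph `Γ(M_n(S))` equals 3. -/
theorem diam_commGraph_nonentire (S : Type*) [CommSemiring S]
    (x y : S) (hx : x ≠ 0) (hy : y ≠ 0) (hxy : x * y = 0)
    (n : ℕ) (hn : 2 ≤ n) :
    (commGraph S n).ediam = 3 := by
  have h10 : (1 : S) ≠ 0 := fun h => hx (by rw [← mul_one x, h, mul_zero])
  -- the two extremal vertices
  have hcomm : nilN S n * (nilN S n)ᵀ ≠ (nilN S n)ᵀ * nilN S n := by
    intro h
    have H := congrFun (congrFun h (⟨0, by omega⟩ : Fin n)) (⟨0, by omega⟩ : Fin n)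
    rw [mul_nilNT, nilNT_mul] at H
    rw [dif_pos (by simp; omega), dif_neg (by simp)] at H
    simp [nilN] at H
    exact h10 H
  have hNnc : ¬ ∀ Y, nilN S n * Y = Y * nilN S n := fun h => hcomm (h (nilN S n)ᵀ)
  have hNTnc : ¬ ∀ Y, (nilN S n)ᵀ * Y = Y * (nilN S n)ᵀ := fun h => hcomm ((h (nilN S n)).symm)
  set u : {X : Matrix (Fin n) (Fin n) S // ¬ ∀ Y, X * Y = Y * X} := ⟨nilN S n, hNnc⟩ with hu
  set v : {X : Matrix (Fin n) (Fin n) S // ¬ ∀ Y, X * Y = Y * X} := ⟨(nilN S n)ᵀ, hNTnc⟩ with hv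
  have hune : u ≠ v := by
    intro h
    have h2 : nilN S n = (nilN S n)ᵀ := congrArg Subtype.val h
    have H := congrFun (congrFun h2 (⟨0, by omega⟩ : Fin n)) (⟨1, by omega⟩ : Fin n)
    simp [nilN] at H
    exact h10 H
  have hadj : ¬ (commGraph S n).Adj u v := fun h => hcomm h.2
  have hmid : ∀ z, ¬ ((commGraph S n).Adj u z ∧ (commGraph S n).Adj z v) := by
    rintro z ⟨h1, h2⟩
    apply z.2
    apply central_of_scalar (z.1 ⟨0, by omega⟩ ⟨0, by omega⟩)
    exact scalar_of_comm_nilN hn z.1 h1.2.symm h2.2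
  have hub : ∀ u v, (commGraph S n).edist u v ≤ 3 := edist_le_three hn x y hx hy hxy
  apply le_antisymm
  · exact SimpleGraph.ediam_le_of_edist_le hub
  · refine le_trans ?_ (SimpleGraph.edist_le_ediam (u := u) (v := v))
    by_contra hlt
    rw [not_le] at hlt
    have hne_top : (commGraph S n).edist u v ≠ ⊤ :=
      ne_of_lt (lt_of_lt_of_le hlt le_top)
    obtain ⟨w, hw⟩ := SimpleGraph.exists_walk_of_edist_ne_top hne_top
    have hlen : (w.length : ℕ∞) < 3 := by rw [hw]; exact hlt
    have hlen' : w.length < 3 := by exact_mod_cast hlen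
    exact absurd (no_short_walk hune hadj hmid w) (by omega)
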